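/- Fix an integer ℓ ≥ 2, set n = ℓ + 1 and h = n, with all indices in ℤ/nℤ. Let a_{ij} = 2 if i = j, a_{ij} = −1 if i − j ≡ ±1 (mod n), and a_{ij} = 0 otherwise; let b_{ij} = 1 if j ≡ i − 1, b_{ij} = −1 if j ≡ i + 1, and b_{ij} = 0 otherwise. For a field K and data φ, χ : ℤ/nℤ → K with φ_j ≠ 0, define R_j(φ, χ) = (φ̃, χ̃) by φ̃_i = φ_i + h·b_{ij}·χ_j/φ_j and χ̃_i = χ_i − a_{ij}·χ_j for all i. Fix j ∈ ℤ/nℤ and suppose that every division performed in the successive applications below has a nonzero denominator (namely: φ_j ≠ 0 and φ_{j+1} ≠ 0; after applying R_j, the (j+1)-component of the resulting φ is nonzero; after applying R_{j+1}, the j-component of the resulting φ is nonzero; and the corresponding conditions for the other composition). Then R_j ∘ R_{j+1} ∘ R_j (φ, χ) = R_{j+1} ∘ R_j ∘ R_{j+1} (φ, χ), componentwise in both φ and χ. -/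

import Mathlib

/-- The Cartan matrix of affine type `A_ℓ^{(1)}` (indices in `ℤ/nℤ`, `n = ℓ+1`):
`a_{ij} = 2` if `i = j`, `−1` if `i − j ≡ ±1`, and `0` otherwise. -/
def cartanA (K : Type*) [Field K] {n : ℕ} (i j : ZMod n) : K :=
  if i = j then 2 else if i - j = 1 ∨ i - j = -1 then -1 else 0

/-- The orientation data: `b_{ij} = 1` if `j = i − 1`, `−1` if `j = i + 1`, `0` else. -/
def orientB (K : Type*) [Field K] {n : ℕ} (i j : ZMod n) : K :=
  if j = i - 1 then 1 else if j = i + 1 then -1 else 0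

/-- The Bäcklund transformation `R_j` of type `A_ℓ^{(1)}` acting on data `(φ, χ)`:
`R_j(φ)_i = φ_i + n·b_{ij}·χ_j/φ_j` and `R_j(χ)_i = χ_i − a_{ij}·χ_j` (here `h = n`). -/
def backlundR (K : Type*) [Field K] {n : ℕ} (j : ZMod n)
    (p : (ZMod n → K) × (ZMod n → K)) : (ZMod n → K) × (ZMod n → K) :=
  (fun i => p.1 i + (n : K) * orientB K i j * (p.2 j / p.1 j),
   fun i => p.2 i - cartanA K i j * p.2 j)

/-- The core field-arithmetic identity behind the braid relation (φ-component),
with the coefficients `b₁ = b_{ij}`, `b₂ = b_{i,j+1}` treated as arbitrary. -/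
private theorem braid_key (K : Type*) [Field K] (N A B X Y b1 b2 pi : K)
    (hA : A ≠ 0) (hB : B ≠ 0)
    (hP : B * A + N * X ≠ 0) (hQ : A * B - N * Y ≠ 0) :
    (pi + N * b1 * (X / A) + N * b2 * ((Y - (-1) * X) / (B + N * 1 * (X / A))))
      + N * b1 * ((X - 2 * X - (-1) * (Y - (-1) * X)) / (A + N * (-1) * ((Y - (-1) * X) / (B + N * 1 * (X / A)))))
    = (pi + N * b2 * (Y / B) + N * b1 * ((X - (-1) * Y) / (A + N * (-1) * (Y / B))))
      + N * b2 * ((Y - 2 * Y - (-1) * (X - (-1) * Y)) / (B + N * 1 * ((X - (-1) * Y) / (A + N * (-1) * (Y / B))))) := by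
  have hD1 : B + N * 1 * (X / A) = (B*A + N*X)/A := by field_simp
  have hE1 : A + N * (-1) * (Y / B) = (A*B - N*Y)/B := by field_simp; ring
  have hD2 : A + N * (-1) * ((Y - (-1) * X) / (B + N * 1 * (X / A)))
      = (A*B - N*Y) * A / (B*A + N*X) := by
    rw [hD1, div_div_eq_mul_div]
    have hP' : A * B + N * X ≠ 0 := by rwa [mul_comm A B]
    field_simp [hP, hP']
    ring
  have hE2 : B + N * 1 * ((X - (-1) * Y) / (A + N * (-1) * (Y / B)))
      = (B*A + N*X) * B / (A*B - N*Y) := by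
    rw [hE1, div_div_eq_mul_div]
    have hQ' : B * A - N * Y ≠ 0 := by rwa [mul_comm B A]
    field_simp [hQ, hQ']
    ring
  rw [hD2, hE2, hD1, hE1]
  rw [div_div_eq_mul_div, div_div_eq_mul_div, div_div_eq_mul_div, div_div_eq_mul_div]
  have hP' : A * B + N * X ≠ 0 := by rwa [mul_comm A B]
  have hQ' : B * A - N * Y ≠ 0 := by rwa [mul_comm B A]
  field_simp [hP, hQ, hP', hQ']
  ring

/-- the braid relation `R_j R_{j+1} R_j = R_{j+1} R_j R_{j+1}` for the
Bäcklund transformations of type `A_ℓ^{(1)}` (`ℓ ≥ 2`), under the nonvanishing of all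
denominators arising in the successive applications. -/
theorem stmt_16 (ℓ : ℕ) (hℓ : 2 ≤ ℓ) (K : Type*) [Field K]
    (p : (ZMod (ℓ + 1) → K) × (ZMod (ℓ + 1) → K)) (j : ZMod (ℓ + 1))
    (h1 : p.1 j ≠ 0) (h2 : p.1 (j + 1) ≠ 0)
    (h3 : (backlundR K j p).1 (j + 1) ≠ 0)
    (h4 : (backlundR K (j + 1) (backlundR K j p)).1 j ≠ 0)
    (h5 : (backlundR K (j + 1) p).1 j ≠ 0)
    (h6 : (backlundR K j (backlundR K (j + 1) p)).1 (j + 1) ≠ 0) :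
    backlundR K j (backlundR K (j + 1) (backlundR K j p))
      = backlundR K (j + 1) (backlundR K j (backlundR K (j + 1) p)) := by
  have hn1 : (1 : ZMod (ℓ+1)) ≠ 0 := by
    have h1 : ((1:ℕ) : ZMod (ℓ+1)) ≠ 0 := by
      rw [Ne, ZMod.natCast_eq_zero_iff]
      intro h; have := Nat.le_of_dvd one_pos h; omega
    exact_mod_cast h1
  have hn2 : (2 : ZMod (ℓ+1)) ≠ 0 := by
    have h1 : ((2:ℕ) : ZMod (ℓ+1)) ≠ 0 := by
      rw [Ne, ZMod.natCast_eq_zero_iff]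
      intro h; have := Nat.le_of_dvd two_pos h; omega
    exact_mod_cast h1
  have hsucc : j + 1 ≠ j := fun h =>
    hn1 (by rw [show (1 : ZMod (ℓ+1)) = (j+1) - j from by ring, h, sub_self])
  have hsucc2 : j + 1 + 1 ≠ j := fun h =>
    hn2 (by rw [show (2 : ZMod (ℓ+1)) = (j+1+1) - j from by ring, h, sub_self])
  have cjj : cartanA K j j = 2 := by simp [cartanA]
  have cj1j1 : cartanA K (j+1) (j+1) = 2 := by simp [cartanA]
  have cj1j : cartanA K (j+1) j = (-1 : K) := by
    rw [cartanA, if_neg hsucc, if_pos (Or.inl (by ring))]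
  have cjj1 : cartanA K j (j+1) = (-1 : K) := by
    rw [cartanA, if_neg (fun h => hsucc h.symm), if_pos (Or.inr (by ring))]
  have ojj : orientB K j j = 0 := by
    rw [orientB, if_neg (fun h => hsucc (eq_sub_iff_add_eq.mp h)),
      if_neg (fun h => hsucc h.symm)]
  have oj1j1 : orientB K (j+1) (j+1) = 0 := by
    rw [orientB, if_neg (fun h => hsucc (add_right_cancel (eq_sub_iff_add_eq.mp h))),
      if_neg (fun h => hsucc (add_right_cancel h.symm))]
  have oj1j : orientB K (j+1) j = (1 : K) := by
    rw [orientB, if_pos (add_sub_cancel_right j 1).symm]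
  have ojj1 : orientB K j (j+1) = (-1 : K) := by
    rw [orientB, if_neg (fun h => hsucc2 (eq_sub_iff_add_eq.mp h)), if_pos rfl]
  simp only [backlundR, cjj, cj1j1, cj1j, cjj1, ojj, oj1j1, oj1j, ojj1,
    mul_zero, zero_mul, add_zero] at h3 h5 ⊢
  have hP : p.1 (j+1) * p.1 j + ((ℓ+1 : ℕ) : K) * p.2 j ≠ 0 := by
    have e : (p.1 (j+1) + ((ℓ+1 : ℕ) : K) * 1 * (p.2 j / p.1 j)) * p.1 j
        = p.1 (j+1) * p.1 j + ((ℓ+1 : ℕ) : K) * p.2 j := by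
      field_simp
    exact e ▸ mul_ne_zero h3 h1
  have hQ : p.1 j * p.1 (j+1) - ((ℓ+1 : ℕ) : K) * p.2 (j+1) ≠ 0 := by
    have e : (p.1 j + ((ℓ+1 : ℕ) : K) * (-1) * (p.2 (j+1) / p.1 (j+1))) * p.1 (j+1)
        = p.1 j * p.1 (j+1) - ((ℓ+1 : ℕ) : K) * p.2 (j+1) := by
      field_simp; ring
    exact e ▸ mul_ne_zero h5 h2
  apply Prod.ext <;> funext i
  · exact braid_key K ((ℓ+1 : ℕ) : K) (p.1 j) (p.1 (j+1)) (p.2 j) (p.2 (j+1))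
      (orientB K i j) (orientB K i (j+1)) (p.1 i) h1 h2 hP hQ
  · ring
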